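/- arXiv:0709.1141 — 3 statements merged into one kernel-verified Lean document; each statement's English description precedes it below -/
import Mathlib

section
/- Proposition 1 (explicit rational solution W₁): Define the vectors L₁ = (1/10)(3z₁−7z₂)(z₁−z₂)³·(1, 1, −2), L₂ = (1/5)(3z₁−7z₂)(z₁−z₂)²·(0, 1, −1), L₃ = (1/10)(7z₁−3z₂)(z₁−z₂)³·(1, −2, 1), L₄ = (1/5)(7z₁−3z₂)(z₁−z₂)²·(0, 1, −1), G₋₂ = (2, −1, −1), G₋₁ = (−2(z₁+z₂), 2z₂, 2z₁), G₀ = (−z₁²+4z₁z₂−z₂², z₁(z₁−2z₂), z₂(z₂−2z₁)) in ℂ³, and set W₁(z) = L₁/(z−z₁)² + L₂/(z−z₁) + L₃/(z−z₂)² + L₄/(z−z₂) + z²·G₋₂ + z·G₋₁ + G₀. Then for every z ∈ ℂ with z ≠ z₁ and z ≠ z₂, W₁ is differentiable at z and W₁′(z) = −2·A(z)·W₁(z). -/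
open Matrix

noncomputable def P1 : Matrix (Fin 3) (Fin 3) ℂ := !![0,1,0; 1,0,0; 0,0,1]
noncomputable def P2 : Matrix (Fin 3) (Fin 3) ℂ := !![0,0,1; 0,1,0; 1,0,0]

/-- The KZ coefficient matrix A(z) = P₁/(z−z₁) + P₂/(z−z₂). -/
noncomputable def A (z₁ z₂ z : ℂ) : Matrix (Fin 3) (Fin 3) ℂ :=
  (z - z₁)⁻¹ • P1 + (z - z₂)⁻¹ • P2

noncomputable def L1 (z₁ z₂ : ℂ) : Fin 3 → ℂ :=
  ((1 : ℂ)/10 * (3*z₁ - 7*z₂) * (z₁ - z₂)^3) • ![1, 1, -2]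
noncomputable def L2 (z₁ z₂ : ℂ) : Fin 3 → ℂ :=
  ((1 : ℂ)/5 * (3*z₁ - 7*z₂) * (z₁ - z₂)^2) • ![0, 1, -1]
noncomputable def L3 (z₁ z₂ : ℂ) : Fin 3 → ℂ :=
  ((1 : ℂ)/10 * (7*z₁ - 3*z₂) * (z₁ - z₂)^3) • ![1, -2, 1]
noncomputable def L4 (z₁ z₂ : ℂ) : Fin 3 → ℂ :=
  ((1 : ℂ)/5 * (7*z₁ - 3*z₂) * (z₁ - z₂)^2) • ![0, 1, -1]

noncomputable def Gm2 : Fin 3 → ℂ := ![2, -1, -1]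
noncomputable def Gm1 (z₁ z₂ : ℂ) : Fin 3 → ℂ := ![-2*(z₁ + z₂), 2*z₂, 2*z₁]
noncomputable def G0 (z₁ z₂ : ℂ) : Fin 3 → ℂ :=
  ![-z₁^2 + 4*z₁*z₂ - z₂^2, z₁*(z₁ - 2*z₂), z₂*(z₂ - 2*z₁)]

/-- The first rational solution W₁. -/
noncomputable def W1 (z₁ z₂ z : ℂ) : Fin 3 → ℂ :=
  ((z - z₁)^2)⁻¹ • L1 z₁ z₂ + (z - z₁)⁻¹ • L2 z₁ z₂ +
  ((z - z₂)^2)⁻¹ • L3 z₁ z₂ + (z - z₂)⁻¹ • L4 z₁ z₂ +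
  z^2 • Gm2 + z • Gm1 z₁ z₂ + G0 z₁ z₂

set_option maxHeartbeats 4000000 in
theorem proposition1 (z₁ z₂ : ℂ) (hz : z₁ ≠ z₂) :
    ∀ z : ℂ, z ≠ z₁ → z ≠ z₂ →
      HasDerivAt (W1 z₁ z₂) ((-2 : ℂ) • (A z₁ z₂ z *ᵥ W1 z₁ z₂ z)) z := by
  intro z h1 h2
  have hz1 : z - z₁ ≠ 0 := sub_ne_zero.mpr h1
  have hz2 : z - z₂ ≠ 0 := sub_ne_zero.mpr h2
  have hu : (z - z₁) * (z - z₁)⁻¹ = 1 := mul_inv_cancel₀ hz1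
  have hv : (z - z₂) * (z - z₂)⁻¹ = 1 := mul_inv_cancel₀ hz2
  have d1 : HasDerivAt (fun z => (z - z₁)) 1 z := (hasDerivAt_id z).sub_const z₁
  have d2 : HasDerivAt (fun z => (z - z₂)) 1 z := (hasDerivAt_id z).sub_const z₂
  have e1 := ((d1.pow 2).inv (pow_ne_zero 2 hz1)).smul_const (L1 z₁ z₂)
  have e2 := (d1.inv hz1).smul_const (L2 z₁ z₂)
  have e3 := ((d2.pow 2).inv (pow_ne_zero 2 hz2)).smul_const (L3 z₁ z₂)
  have e4 := (d2.inv hz2).smul_const (L4 z₁ z₂)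
  have e5 := ((hasDerivAt_id z).pow 2).smul_const Gm2
  have e6 := (hasDerivAt_id z).smul_const (Gm1 z₁ z₂)
  have H : HasDerivAt (W1 z₁ z₂) _ z :=
    (((((e1.add e2).add e3).add e4).add e5).add e6).add_const (G0 z₁ z₂)
  convert H using 1
  funext i
  fin_cases i
  · simp only [W1, A, P1, P2, L1, L2, L3, L4, Gm2, Gm1, G0, Matrix.mulVec, dotProduct,
      Fin.sum_univ_three, Matrix.add_apply, Matrix.smul_apply, Pi.add_apply, Pi.smul_apply,
      smul_eq_mul, Matrix.cons_val', Matrix.cons_val_zero, Matrix.cons_val_one, Matrix.head_cons, Matrix.of_apply,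
      Matrix.empty_val', Matrix.cons_val_fin_one, Matrix.head_fin_const, Matrix.cons_val_two,
      Matrix.tail_cons, Fin.isValue, id_eq, Fin.zero_eta, Fin.mk_one, Fin.reduceFinMk]
    simp only [div_eq_mul_inv, ← inv_pow, Pi.pow_apply]
    linear_combination (((-22 : ℂ)/5) * (z - z₂) + (12 : ℂ) * (z - z₂) ^ 2 * (z - z₂)⁻¹ + ((42 : ℂ)/5) * (z - z₂) ^ 2 * (z - z₁)⁻¹ + ((-24 : ℂ)/5) * (z - z₂) ^ 3 * (z - z₂)⁻¹ ^ 2 + ((-56 : ℂ)/5) * (z - z₂) ^ 3 * (z - z₁)⁻¹ * (z - z₂)⁻¹ + ((7 : ℂ)/5) * (z - z₂) ^ 4 * (z - z₁)⁻¹ ^ 3 + ((4 : ℂ)/5) * (z - z₁) + ((-32 : ℂ)/5) * (z - z₁) * (z - z₂) * (z - z₂)⁻¹ + ((-42 : ℂ)/5) * (z - z₁) * (z - z₂) * (z - z₁)⁻¹ + ((36 : ℂ)/5) * (z - z₁) * (z - z₂) ^ 2 * (z - z₂)⁻¹ ^ 2 + ((84 : ℂ)/5) * (z - z₁) * (z -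 z₂) ^ 2 * (z - z₁)⁻¹ * (z - z₂)⁻¹ + ((-28 : ℂ)/5) * (z - z₁) * (z - z₂) ^ 3 * (z - z₁)⁻¹ ^ 3 + ((6 : ℂ)/5) * (z - z₁) ^ 2 * (z - z₂)⁻¹ + ((14 : ℂ)/5) * (z - z₁) ^ 2 * (z - z₁)⁻¹ + ((-24 : ℂ)/5) * (z - z₁) ^ 2 * (z - z₂) * (z - z₂)⁻¹ ^ 2 + ((-56 : ℂ)/5) * (z - z₁) ^ 2 * (z - z₂) * (z - z₁)⁻¹ * (z - z₂)⁻¹ + ((42 : ℂ)/5) * (z - z₁) ^ 2 * (z - z₂) ^ 2 * (z - z₁)⁻¹ ^ 3 + ((6 : ℂ)/5) * (z - z₁) ^ 3 * (z - z₂)⁻¹ ^ 2 + ((14 : ℂ)/5) * (z - z₁) ^ 3 * (z - z₁)⁻¹ * (z - z₂)⁻¹ + ((-28 : ℂ)/5) * (z - z₁) ^ 3 * (z - z₂) * (z - z₁)⁻¹ ^ 3 + ((7 : ℂ)/5) * (z - z₁) ^ 4 * (z - z₁)⁻¹ ^ 3 + ((8 : ℂ)/5) * z₁ + ((8 : ℂ)/5)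 * z₁ * (z - z₂) * (z - z₂)⁻¹ + ((-16 : ℂ)/5) * z₁ * (z - z₂) * (z - z₁)⁻¹ + ((-24 : ℂ)/5) * z₁ * (z - z₂) ^ 2 * (z - z₂)⁻¹ ^ 2 + ((24 : ℂ)/5) * z₁ * (z - z₂) ^ 2 * (z - z₁)⁻¹ * (z - z₂)⁻¹ + ((-4 : ℂ)/5) * z₁ * (z - z₂) ^ 3 * (z - z₁)⁻¹ ^ 3 + ((-8 : ℂ)/5) * z₁ * (z - z₁) * (z - z₂)⁻¹ + ((8 : ℂ)/5) * z₁ * (z - z₁) * (z - z₁)⁻¹ + ((24 : ℂ)/5) * z₁ * (z - z₁) * (z - z₂) * (z - z₂)⁻¹ ^ 2 + ((-24 : ℂ)/5) * z₁ * (z - z₁) * (z - z₂) * (z - z₁)⁻¹ * (z - z₂)⁻¹ + ((12 : ℂ)/5) * z₁ * (z - z₁) * (z - z₂) ^ 2 * (z - z₁)⁻¹ ^ 3 + ((-8 : ℂ)/5) * z₁ * (z - z₁) ^ 2 * (z - z₂)⁻¹ ^ 2 + ((8 : ℂ)/5) * z₁ * (z - z₁) ^ 2 * (z - z₁)⁻¹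 * (z - z₂)⁻¹ + ((-12 : ℂ)/5) * z₁ * (z - z₁) ^ 2 * (z - z₂) * (z - z₁)⁻¹ ^ 3 + ((4 : ℂ)/5) * z₁ * (z - z₁) ^ 3 * (z - z₁)⁻¹ ^ 3) * hu + (((32 : ℂ)/5) * (z - z₂) + ((-18 : ℂ)/5) * (z - z₂) ^ 2 * (z - z₂)⁻¹ + ((-42 : ℂ)/5) * (z - z₂) ^ 2 * (z - z₁)⁻¹ + ((6 : ℂ)/5) * (z - z₂) ^ 3 * (z - z₁)⁻¹ * (z - z₂)⁻¹ + ((14 : ℂ)/5) * (z - z₂) ^ 3 * (z - z₁)⁻¹ ^ 2 + ((3 : ℂ)/5) * (z - z₂) ^ 4 * (z - z₂)⁻¹ ^ 3 + ((6 : ℂ)/5) * (z - z₁) + ((18 : ℂ)/5) * (z - z₁) * (z - z₂) * (z - z₂)⁻¹ + ((-12 : ℂ)/5) * (z - z₁) * (z - z₂) ^ 3 * (z - z₂)⁻¹ ^ 3 + ((-6 : ℂ)/5) * (z - z₁) ^ 2 * (z - z₂)⁻¹ + ((18 : ℂ)/5) * (z - z₁) ^ 2 * (z - z₂) ^ 2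 * (z - z₂)⁻¹ ^ 3 + ((-12 : ℂ)/5) * (z - z₁) ^ 3 * (z - z₂) * (z - z₂)⁻¹ ^ 3 + ((3 : ℂ)/5) * (z - z₁) ^ 4 * (z - z₂)⁻¹ ^ 3 + ((-8 : ℂ)/5) * z₁ + ((-16 : ℂ)/5) * z₁ * (z - z₂) * (z - z₂)⁻¹ + ((16 : ℂ)/5) * z₁ * (z - z₂) * (z - z₁)⁻¹ + ((8 : ℂ)/5) * z₁ * (z - z₂) ^ 2 * (z - z₁)⁻¹ * (z - z₂)⁻¹ + ((-8 : ℂ)/5) * z₁ * (z - z₂) ^ 2 * (z - z₁)⁻¹ ^ 2 + ((4 : ℂ)/5) * z₁ * (z - z₂) ^ 3 * (z - z₂)⁻¹ ^ 3 + ((8 : ℂ)/5) * z₁ * (z - z₁) * (z - z₂)⁻¹ + ((-12 : ℂ)/5) * z₁ * (z - z₁) * (z - z₂) ^ 2 * (z - z₂)⁻¹ ^ 3 + ((12 : ℂ)/5) * z₁ * (z - z₁) ^ 2 * (z - z₂) * (z - z₂)⁻¹ ^ 3 + ((-4 : ℂ)/5) * z₁ * (z - z₁) ^ 3 * (z - z₂)⁻¹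 ^ 3) * hv
  · simp only [W1, A, P1, P2, L1, L2, L3, L4, Gm2, Gm1, G0, Matrix.mulVec, dotProduct,
      Fin.sum_univ_three, Matrix.add_apply, Matrix.smul_apply, Pi.add_apply, Pi.smul_apply,
      smul_eq_mul, Matrix.cons_val', Matrix.cons_val_zero, Matrix.cons_val_one, Matrix.head_cons, Matrix.of_apply,
      Matrix.empty_val', Matrix.cons_val_fin_one, Matrix.head_fin_const, Matrix.cons_val_two,
      Matrix.tail_cons, Fin.isValue, id_eq, Fin.zero_eta, Fin.mk_one, Fin.reduceFinMk]
    simp only [div_eq_mul_inv, ← inv_pow, Pi.pow_apply]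
    linear_combination (((-19 : ℂ)/5) * (z - z₂) + ((-21 : ℂ)/5) * (z - z₂) ^ 2 * (z - z₁)⁻¹ + ((12 : ℂ)/5) * (z - z₂) ^ 3 * (z - z₂)⁻¹ ^ 2 + ((28 : ℂ)/5) * (z - z₂) ^ 3 * (z - z₁)⁻¹ * (z - z₂)⁻¹ + ((7 : ℂ)/5) * (z - z₂) ^ 4 * (z - z₁)⁻¹ ^ 3 + ((3 : ℂ)/5) * (z - z₁) + ((-14 : ℂ)/5) * (z - z₁) * (z - z₂) * (z - z₂)⁻¹ + ((21 : ℂ)/5) * (z - z₁) * (z - z₂) * (z - z₁)⁻¹ + ((-18 : ℂ)/5) * (z - z₁) * (z - z₂) ^ 2 * (z - z₂)⁻¹ ^ 2 + ((-42 : ℂ)/5) * (z - z₁) * (z - z₂) ^ 2 * (z - z₁)⁻¹ * (z - z₂)⁻¹ + ((-28 : ℂ)/5) * (z - z₁) * (z - z₂) ^ 3 * (z - z₁)⁻¹ ^ 3 + ((7 : ℂ)/5) * (z - z₁) ^ 2 * (z - z₂)⁻¹ + ((-7 : ℂ)/5) * (z - z₁) ^ 2 * (z - z₁)⁻¹ +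 ((12 : ℂ)/5) * (z - z₁) ^ 2 * (z - z₂) * (z - z₂)⁻¹ ^ 2 + ((28 : ℂ)/5) * (z - z₁) ^ 2 * (z - z₂) * (z - z₁)⁻¹ * (z - z₂)⁻¹ + ((42 : ℂ)/5) * (z - z₁) ^ 2 * (z - z₂) ^ 2 * (z - z₁)⁻¹ ^ 3 + ((-3 : ℂ)/5) * (z - z₁) ^ 3 * (z - z₂)⁻¹ ^ 2 + ((-7 : ℂ)/5) * (z - z₁) ^ 3 * (z - z₁)⁻¹ * (z - z₂)⁻¹ + ((-28 : ℂ)/5) * (z - z₁) ^ 3 * (z - z₂) * (z - z₁)⁻¹ ^ 3 + ((7 : ℂ)/5) * (z - z₁) ^ 4 * (z - z₁)⁻¹ ^ 3 + ((-4 : ℂ)/5) * z₁ + ((-4 : ℂ)/5) * z₁ * (z - z₂) * (z - z₂)⁻¹ + ((8 : ℂ)/5) * z₁ * (z - z₂) * (z - z₁)⁻¹ + ((12 : ℂ)/5) * z₁ * (z - z₂) ^ 2 * (z - z₂)⁻¹ ^ 2 + ((-12 : ℂ)/5) * z₁ * (z - z₂) ^ 2 * (z - z₁)⁻¹ * (z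 - z₂)⁻¹ + ((-4 : ℂ)/5) * z₁ * (z - z₂) ^ 3 * (z - z₁)⁻¹ ^ 3 + ((4 : ℂ)/5) * z₁ * (z - z₁) * (z - z₂)⁻¹ + ((-4 : ℂ)/5) * z₁ * (z - z₁) * (z - z₁)⁻¹ + ((-12 : ℂ)/5) * z₁ * (z - z₁) * (z - z₂) * (z - z₂)⁻¹ ^ 2 + ((12 : ℂ)/5) * z₁ * (z - z₁) * (z - z₂) * (z - z₁)⁻¹ * (z - z₂)⁻¹ + ((12 : ℂ)/5) * z₁ * (z - z₁) * (z - z₂) ^ 2 * (z - z₁)⁻¹ ^ 3 + ((4 : ℂ)/5) * z₁ * (z - z₁) ^ 2 * (z - z₂)⁻¹ ^ 2 + ((-4 : ℂ)/5) * z₁ * (z - z₁) ^ 2 * (z - z₁)⁻¹ * (z - z₂)⁻¹ + ((-12 : ℂ)/5) * z₁ * (z - z₁) ^ 2 * (z - z₂) * (z - z₁)⁻¹ ^ 3 + ((4 : ℂ)/5) * z₁ * (z - z₁) ^ 3 * (z - z₁)⁻¹ ^ 3) * hu + (((9 : ℂ)/5) * (z - z₂) + ((9 : ℂ)/5) * (z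 - z₂) ^ 2 * (z - z₂)⁻¹ + ((11 : ℂ)/5) * (z - z₂) ^ 2 * (z - z₁)⁻¹ + ((-3 : ℂ)/5) * (z - z₂) ^ 3 * (z - z₁)⁻¹ * (z - z₂)⁻¹ + ((-7 : ℂ)/5) * (z - z₂) ^ 3 * (z - z₁)⁻¹ ^ 2 + ((-6 : ℂ)/5) * (z - z₂) ^ 4 * (z - z₂)⁻¹ ^ 3 + ((-3 : ℂ)/5) * (z - z₁) + ((-9 : ℂ)/5) * (z - z₁) * (z - z₂) * (z - z₂)⁻¹ + ((24 : ℂ)/5) * (z - z₁) * (z - z₂) ^ 3 * (z - z₂)⁻¹ ^ 3 + ((3 : ℂ)/5) * (z - z₁) ^ 2 * (z - z₂)⁻¹ + ((-36 : ℂ)/5) * (z - z₁) ^ 2 * (z - z₂) ^ 2 * (z - z₂)⁻¹ ^ 3 + ((24 : ℂ)/5) * (z - z₁) ^ 3 * (z - z₂) * (z - z₂)⁻¹ ^ 3 + ((-6 : ℂ)/5) * (z - z₁) ^ 4 * (z - z₂)⁻¹ ^ 3 + ((4 : ℂ)/5) * z₁ + ((8 : ℂ)/5) * z₁ * (z - z₂)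 * (z - z₂)⁻¹ + ((-8 : ℂ)/5) * z₁ * (z - z₂) * (z - z₁)⁻¹ + ((-4 : ℂ)/5) * z₁ * (z - z₂) ^ 2 * (z - z₁)⁻¹ * (z - z₂)⁻¹ + ((4 : ℂ)/5) * z₁ * (z - z₂) ^ 2 * (z - z₁)⁻¹ ^ 2 + ((-8 : ℂ)/5) * z₁ * (z - z₂) ^ 3 * (z - z₂)⁻¹ ^ 3 + ((-4 : ℂ)/5) * z₁ * (z - z₁) * (z - z₂)⁻¹ + ((24 : ℂ)/5) * z₁ * (z - z₁) * (z - z₂) ^ 2 * (z - z₂)⁻¹ ^ 3 + ((-24 : ℂ)/5) * z₁ * (z - z₁) ^ 2 * (z - z₂) * (z - z₂)⁻¹ ^ 3 + ((8 : ℂ)/5) * z₁ * (z - z₁) ^ 3 * (z - z₂)⁻¹ ^ 3) * hv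
  · simp only [W1, A, P1, P2, L1, L2, L3, L4, Gm2, Gm1, G0, Matrix.mulVec, dotProduct,
      Fin.sum_univ_three, Matrix.add_apply, Matrix.smul_apply, Pi.add_apply, Pi.smul_apply,
      smul_eq_mul, Matrix.cons_val', Matrix.cons_val_zero, Matrix.cons_val_one, Matrix.head_cons, Matrix.of_apply,
      Matrix.empty_val', Matrix.cons_val_fin_one, Matrix.head_fin_const, Matrix.cons_val_two,
      Matrix.tail_cons, Fin.isValue, id_eq, Fin.zero_eta, Fin.mk_one, Fin.reduceFinMk]
    simp only [div_eq_mul_inv, ← inv_pow, Pi.pow_apply]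
    linear_combination (((41 : ℂ)/5) * (z - z₂) + (-12 : ℂ) * (z - z₂) ^ 2 * (z - z₂)⁻¹ + ((-21 : ℂ)/5) * (z - z₂) ^ 2 * (z - z₁)⁻¹ + ((12 : ℂ)/5) * (z - z₂) ^ 3 * (z - z₂)⁻¹ ^ 2 + ((28 : ℂ)/5) * (z - z₂) ^ 3 * (z - z₁)⁻¹ * (z - z₂)⁻¹ + ((-14 : ℂ)/5) * (z - z₂) ^ 4 * (z - z₁)⁻¹ ^ 3 + ((-7 : ℂ)/5) * (z - z₁) + ((46 : ℂ)/5) * (z - z₁) * (z - z₂) * (z - z₂)⁻¹ + ((21 : ℂ)/5) * (z - z₁) * (z - z₂) * (z - z₁)⁻¹ + ((-18 : ℂ)/5) * (z - z₁) * (z - z₂) ^ 2 * (z - z₂)⁻¹ ^ 2 + ((-42 : ℂ)/5) * (z - z₁) * (z - z₂) ^ 2 * (z - z₁)⁻¹ * (z - z₂)⁻¹ + ((56 : ℂ)/5) * (z - z₁) * (z - z₂) ^ 3 * (z - z₁)⁻¹ ^ 3 + ((-13 : ℂ)/5) * (z - z₁) ^ 2 * (z - z₂)⁻¹ + ((-7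 : ℂ)/5) * (z - z₁) ^ 2 * (z - z₁)⁻¹ + ((12 : ℂ)/5) * (z - z₁) ^ 2 * (z - z₂) * (z - z₂)⁻¹ ^ 2 + ((28 : ℂ)/5) * (z - z₁) ^ 2 * (z - z₂) * (z - z₁)⁻¹ * (z - z₂)⁻¹ + ((-84 : ℂ)/5) * (z - z₁) ^ 2 * (z - z₂) ^ 2 * (z - z₁)⁻¹ ^ 3 + ((-3 : ℂ)/5) * (z - z₁) ^ 3 * (z - z₂)⁻¹ ^ 2 + ((-7 : ℂ)/5) * (z - z₁) ^ 3 * (z - z₁)⁻¹ * (z - z₂)⁻¹ + ((56 : ℂ)/5) * (z - z₁) ^ 3 * (z - z₂) * (z - z₁)⁻¹ ^ 3 + ((-14 : ℂ)/5) * (z - z₁) ^ 4 * (z - z₁)⁻¹ ^ 3 + ((-4 : ℂ)/5) * z₁ + ((-4 : ℂ)/5) * z₁ * (z - z₂) * (z - z₂)⁻¹ + ((8 : ℂ)/5) * z₁ * (z - z₂) * (z - z₁)⁻¹ + ((12 : ℂ)/5) * z₁ * (z - z₂) ^ 2 * (z - z₂)⁻¹ ^ 2 + ((-12 : ℂ)/5)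 * z₁ * (z - z₂) ^ 2 * (z - z₁)⁻¹ * (z - z₂)⁻¹ + ((8 : ℂ)/5) * z₁ * (z - z₂) ^ 3 * (z - z₁)⁻¹ ^ 3 + ((4 : ℂ)/5) * z₁ * (z - z₁) * (z - z₂)⁻¹ + ((-4 : ℂ)/5) * z₁ * (z - z₁) * (z - z₁)⁻¹ + ((-12 : ℂ)/5) * z₁ * (z - z₁) * (z - z₂) * (z - z₂)⁻¹ ^ 2 + ((12 : ℂ)/5) * z₁ * (z - z₁) * (z - z₂) * (z - z₁)⁻¹ * (z - z₂)⁻¹ + ((-24 : ℂ)/5) * z₁ * (z - z₁) * (z - z₂) ^ 2 * (z - z₁)⁻¹ ^ 3 + ((4 : ℂ)/5) * z₁ * (z - z₁) ^ 2 * (z - z₂)⁻¹ ^ 2 + ((-4 : ℂ)/5) * z₁ * (z - z₁) ^ 2 * (z - z₁)⁻¹ * (z - z₂)⁻¹ + ((24 : ℂ)/5) * z₁ * (z - z₁) ^ 2 * (z - z₂) * (z - z₁)⁻¹ ^ 3 + ((-8 : ℂ)/5) * z₁ * (z - z₁) ^ 3 * (z - z₁)⁻¹ ^ 3) * hu + (((-41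 : ℂ)/5) * (z - z₂) + ((9 : ℂ)/5) * (z - z₂) ^ 2 * (z - z₂)⁻¹ + ((31 : ℂ)/5) * (z - z₂) ^ 2 * (z - z₁)⁻¹ + ((-3 : ℂ)/5) * (z - z₂) ^ 3 * (z - z₁)⁻¹ * (z - z₂)⁻¹ + ((-7 : ℂ)/5) * (z - z₂) ^ 3 * (z - z₁)⁻¹ ^ 2 + ((3 : ℂ)/5) * (z - z₂) ^ 4 * (z - z₂)⁻¹ ^ 3 + ((-3 : ℂ)/5) * (z - z₁) + ((-9 : ℂ)/5) * (z - z₁) * (z - z₂) * (z - z₂)⁻¹ + ((-12 : ℂ)/5) * (z - z₁) * (z - z₂) ^ 3 * (z - z₂)⁻¹ ^ 3 + ((3 : ℂ)/5) * (z - z₁) ^ 2 * (z - z₂)⁻¹ + ((18 : ℂ)/5) * (z - z₁) ^ 2 * (z - z₂) ^ 2 * (z - z₂)⁻¹ ^ 3 + ((-12 : ℂ)/5) * (z - z₁) ^ 3 * (z - z₂) * (z - z₂)⁻¹ ^ 3 + ((3 : ℂ)/5) * (z - z₁) ^ 4 * (z - z₂)⁻¹ ^ 3 + ((4 : ℂ)/5)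 * z₁ + ((8 : ℂ)/5) * z₁ * (z - z₂) * (z - z₂)⁻¹ + ((-8 : ℂ)/5) * z₁ * (z - z₂) * (z - z₁)⁻¹ + ((-4 : ℂ)/5) * z₁ * (z - z₂) ^ 2 * (z - z₁)⁻¹ * (z - z₂)⁻¹ + ((4 : ℂ)/5) * z₁ * (z - z₂) ^ 2 * (z - z₁)⁻¹ ^ 2 + ((4 : ℂ)/5) * z₁ * (z - z₂) ^ 3 * (z - z₂)⁻¹ ^ 3 + ((-4 : ℂ)/5) * z₁ * (z - z₁) * (z - z₂)⁻¹ + ((-12 : ℂ)/5) * z₁ * (z - z₁) * (z - z₂) ^ 2 * (z - z₂)⁻¹ ^ 3 + ((12 : ℂ)/5) * z₁ * (z - z₁) ^ 2 * (z - z₂) * (z - z₂)⁻¹ ^ 3 + ((-4 : ℂ)/5) * z₁ * (z - z₁) ^ 3 * (z - z₂)⁻¹ ^ 3) * hv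
end

section
/- Proposition 2 (existence of a second pure-pole rational solution W₂): There exist vectors M₁, M₂, M₃, M₄ ∈ ℂ³ satisfying M₂ + M₄ = 0 and M₁ + z₁·M₂ + M₃ + z₂·M₄ = (0, 1, −1), such that the function W₂(z) = M₁/(z−z₁)² + M₂/(z−z₁) + M₃/(z−z₂)² + M₄/(z−z₂) satisfies W₂′(z) = −2·A(z)·W₂(z) for every z ∈ ℂ with z ≠ z₁ and z ≠ z₂. -/
open Matrix

/-- A pure-pole rational function with double poles at z₁ and z₂. -/
noncomputable def polePart (z₁ z₂ : ℂ) (M₁ M₂ M₃ M₄ : Fin 3 → ℂ) (z : ℂ) : Fin 3 → ℂ :=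
  ((z - z₁)^2)⁻¹ • M₁ + (z - z₁)⁻¹ • M₂ + ((z - z₂)^2)⁻¹ • M₃ + (z - z₂)⁻¹ • M₄

lemma aux_deriv_sq (c z : ℂ) (h : z ≠ c) :
    HasDerivAt (fun z => ((z - c)^2)⁻¹) (-(2*(z-c)) / ((z-c)^2)^2) z := by
  have h1 : HasDerivAt (fun z : ℂ => (z - c)^2) (2*(z-c)) z := by
    have := ((hasDerivAt_id z).sub_const c).pow 2
    simpa [Pi.pow_def] using this
  exact h1.inv (pow_ne_zero 2 (sub_ne_zero.mpr h))

lemma aux_deriv_inv (c z : ℂ) (h : z ≠ c) :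
    HasDerivAt (fun z => (z - c)⁻¹) (-1 / (z-c)^2) z := by
  have h1 : HasDerivAt (fun z : ℂ => z - c) 1 z := (hasDerivAt_id z).sub_const c
  simpa [Pi.inv_def] using h1.inv (sub_ne_zero.mpr h)

set_option maxHeartbeats 4000000 in
lemma aux_main (z₁ z₂ z : ℂ) (hz : z₁ ≠ z₂) (h1 : z - z₁ ≠ 0) (h2 : z - z₂ ≠ 0) :
    ((-2 : ℂ) • (A z₁ z₂ z *ᵥ polePart z₁ z₂ ![3/5,3/5,0] ((5*(z₁-z₂))⁻¹ • ![-4,-2,-6]) ![1/5,4/5,1/5] ((5*(z₁-z₂))⁻¹ • ![4,2,6]) z))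
    = (((-(2*(z-z₁)) / ((z-z₁)^2)^2) • (![3/5,3/5,0] : Fin 3 → ℂ) + (-1 / (z-z₁)^2) • ((5*(z₁-z₂))⁻¹ • (![-4,-2,-6] : Fin 3 → ℂ))
        + (-(2*(z-z₂)) / ((z-z₂)^2)^2) • (![1/5,4/5,1/5] : Fin 3 → ℂ) + (-1 / (z-z₂)^2) • ((5*(z₁-z₂))⁻¹ • (![4,2,6] : Fin 3 → ℂ))) : Fin 3 → ℂ) := by
  have hd : z₁ - z₂ ≠ 0 := sub_ne_zero.mpr hz
  have hed : (z₁ - z₂) * (z₁ - z₂)⁻¹ = 1 := mul_inv_cancel₀ hd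
  have h3 : (z - z₁) * (z - z₁)⁻¹ = 1 := mul_inv_cancel₀ h1
  have h4 : (z - z₂) * (z - z₂)⁻¹ = 1 := mul_inv_cancel₀ h2
  have hfin2 : (⟨2, by omega⟩ : Fin 3) = 2 := rfl
  have key : (z - z₁)⁻¹ - (z - z₂)⁻¹ = (z₁ - z₂) * ((z - z₁)⁻¹ * (z - z₂)⁻¹) := by
    rw [inv_sub_inv h1 h2]
    field_simp
    ring
  have huv : (z - z₁)⁻¹ * (z - z₂)⁻¹
      = (z₁ - z₂)⁻¹ * (z - z₁)⁻¹ - (z₁ - z₂)⁻¹ * (z - z₂)⁻¹ := by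
    linear_combination (-(z₁ - z₂)⁻¹) * key + (-((z - z₁)⁻¹ * (z - z₂)⁻¹)) * hed
  have huv2 : (z - z₁)⁻¹ * ((z - z₂)⁻¹)^2
      = ((z₁ - z₂)⁻¹)^2 * (z - z₁)⁻¹ - ((z₁ - z₂)⁻¹)^2 * (z - z₂)⁻¹
        - (z₁ - z₂)⁻¹ * ((z - z₂)⁻¹)^2 := by
    linear_combination ((z - z₂)⁻¹ + (z₁ - z₂)⁻¹) * huv
  have hu2v : ((z - z₁)⁻¹)^2 * (z - z₂)⁻¹
      = (z₁ - z₂)⁻¹ * ((z - z₁)⁻¹)^2 - ((z₁ - z₂)⁻¹)^2 * (z - z₁)⁻¹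
        + ((z₁ - z₂)⁻¹)^2 * (z - z₂)⁻¹ := by
    linear_combination ((z - z₁)⁻¹ - (z₁ - z₂)⁻¹) * huv
  funext i
  fin_cases i
  · simp only [A, P1, P2, polePart, mulVec, dotProduct, Fin.sum_univ_three, Fin.mk_zero, hfin2,
      Fin.mk_one, Matrix.add_apply, Matrix.smul_apply, Pi.add_apply, Pi.smul_apply,
      smul_eq_mul, Matrix.cons_val_zero, Matrix.cons_val_one, Matrix.head_cons,
      Matrix.cons_val_two, Matrix.tail_cons, Matrix.cons_val', Matrix.of_apply,
      Matrix.empty_val', Matrix.cons_val_fin_one, Matrix.head_fin_const,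
      div_eq_mul_inv, mul_inv, ← inv_pow]
    linear_combination ((8/5 : ℂ)*(z₁ - z₂)⁻¹)*huv + (-8/5 : ℂ)*huv2
      + ((6/5 : ℂ)*(z - z₁)⁻¹^3)*h3 + ((2/5 : ℂ)*(z - z₂)⁻¹^3)*h4
  · simp only [A, P1, P2, polePart, mulVec, dotProduct, Fin.sum_univ_three, Fin.mk_zero, hfin2,
      Fin.mk_one, Matrix.add_apply, Matrix.smul_apply, Pi.add_apply, Pi.smul_apply,
      smul_eq_mul, Matrix.cons_val_zero, Matrix.cons_val_one, Matrix.head_cons,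
      Matrix.cons_val_two, Matrix.tail_cons, Matrix.cons_val', Matrix.of_apply,
      Matrix.empty_val', Matrix.cons_val_fin_one, Matrix.head_fin_const,
      div_eq_mul_inv, mul_inv, ← inv_pow]
    linear_combination ((-4/5 : ℂ)*(z₁ - z₂)⁻¹)*huv + (-2/5 : ℂ)*huv2 + (-6/5 : ℂ)*hu2v
      + ((6/5 : ℂ)*(z - z₁)⁻¹^3)*h3 + ((8/5 : ℂ)*(z - z₂)⁻¹^3)*h4
  · simp only [A, P1, P2, polePart, mulVec, dotProduct, Fin.sum_univ_three, Fin.mk_zero, hfin2,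
      Fin.mk_one, Matrix.add_apply, Matrix.smul_apply, Pi.add_apply, Pi.smul_apply,
      smul_eq_mul, Matrix.cons_val_zero, Matrix.cons_val_one, Matrix.head_cons,
      Matrix.cons_val_two, Matrix.tail_cons, Matrix.cons_val', Matrix.of_apply,
      Matrix.empty_val', Matrix.cons_val_fin_one, Matrix.head_fin_const,
      div_eq_mul_inv, mul_inv, ← inv_pow]
    linear_combination ((-4/5 : ℂ)*(z₁ - z₂)⁻¹)*huv + (-2/5 : ℂ)*huv2 + (-6/5 : ℂ)*hu2v
      + ((2/5 : ℂ)*(z - z₂)⁻¹^3)*h4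

theorem proposition2 (z₁ z₂ : ℂ) (hz : z₁ ≠ z₂) :
    ∃ M₁ M₂ M₃ M₄ : Fin 3 → ℂ,
      M₂ + M₄ = 0 ∧
      M₁ + z₁ • M₂ + M₃ + z₂ • M₄ = ![0, 1, -1] ∧
      ∀ z : ℂ, z ≠ z₁ → z ≠ z₂ →
        HasDerivAt (polePart z₁ z₂ M₁ M₂ M₃ M₄)
          ((-2 : ℂ) • (A z₁ z₂ z *ᵥ polePart z₁ z₂ M₁ M₂ M₃ M₄ z)) z := by
  have hd : z₁ - z₂ ≠ 0 := sub_ne_zero.mpr hz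
  have hed : (z₁ - z₂) * (z₁ - z₂)⁻¹ = 1 := mul_inv_cancel₀ hd
  have hfin2 : (⟨2, by omega⟩ : Fin 3) = 2 := rfl
  refine ⟨![3/5, 3/5, 0], (5*(z₁-z₂))⁻¹ • ![-4, -2, -6],
          ![1/5, 4/5, 1/5], (5*(z₁-z₂))⁻¹ • ![4, 2, 6], ?_, ?_, ?_⟩
  · funext i; fin_cases i <;> simp
  · funext i
    fin_cases i
    · simp only [Fin.mk_zero, Fin.mk_one, hfin2, Pi.add_apply, Pi.smul_apply, smul_eq_mul,
        Matrix.cons_val_zero, Matrix.cons_val_one, Matrix.head_cons, Matrix.cons_val_two,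
        Matrix.tail_cons, mul_inv]
      linear_combination (-4/5 : ℂ) * hed
    · simp only [Fin.mk_zero, Fin.mk_one, hfin2, Pi.add_apply, Pi.smul_apply, smul_eq_mul,
        Matrix.cons_val_zero, Matrix.cons_val_one, Matrix.head_cons, Matrix.cons_val_two,
        Matrix.tail_cons, mul_inv]
      linear_combination (-2/5 : ℂ) * hed
    · simp only [Fin.mk_zero, Fin.mk_one, hfin2, Pi.add_apply, Pi.smul_apply, smul_eq_mul,
        Matrix.cons_val_zero, Matrix.cons_val_one, Matrix.head_cons, Matrix.cons_val_two,
        Matrix.tail_cons, mul_inv]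
      linear_combination (-6/5 : ℂ) * hed
  · intro z hz1 hz2
    have h1 : z - z₁ ≠ 0 := sub_ne_zero.mpr hz1
    have h2 : z - z₂ ≠ 0 := sub_ne_zero.mpr hz2
    have hder : HasDerivAt
        (polePart z₁ z₂ ![3/5,3/5,0] ((5*(z₁-z₂))⁻¹ • ![-4,-2,-6]) ![1/5,4/5,1/5]
          ((5*(z₁-z₂))⁻¹ • ![4,2,6]))
        ((-(2*(z-z₁)) / ((z-z₁)^2)^2) • (![3/5,3/5,0] : Fin 3 → ℂ)
          + (-1 / (z-z₁)^2) • ((5*(z₁-z₂))⁻¹ • (![-4,-2,-6] : Fin 3 → ℂ))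
          + (-(2*(z-z₂)) / ((z-z₂)^2)^2) • (![1/5,4/5,1/5] : Fin 3 → ℂ)
          + (-1 / (z-z₂)^2) • ((5*(z₁-z₂))⁻¹ • (![4,2,6] : Fin 3 → ℂ))) z := by
      exact ((((aux_deriv_sq z₁ z hz1).smul_const _).add
        ((aux_deriv_inv z₁ z hz1).smul_const _)).add
        ((aux_deriv_sq z₂ z hz2).smul_const _)).add
        ((aux_deriv_inv z₂ z hz2).smul_const _)
    rw [aux_main z₁ z₂ z hz h1 h2]
    exact hder
end

section
/- Linear independence of the three rational solutions: Let W₁, W₂, W₃ be as in Theorem 1 (W₁ and W₃ given explicitly, and W₂ any KZ solution of the pure-pole form M₁/(z−z₁)² + M₂/(z−z₁) + M₃/(z−z₂)² + M₄/(z−z₂) with M₂ + M₄ = 0 and M₁ + z₁M₂ + M₃ + z₂M₄ = (0,1,−1)). Then W₁, W₂, W₃ are linearly independent over ℂ as functions on ℂ ∖ {z₁, z₂}: if α₁·W₁(z) + α₂·W₂(z) + α₃·W₃(z) = 0 for all z ∈ ℂ ∖ {z₁, z₂}, then α₁ = α₂ = α₃ = 0. -/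
open Matrix

/-- The third rational solution W₃. -/
noncomputable def W3 (z₁ z₂ z : ℂ) : Fin 3 → ℂ :=
  (((z₁ - z₂)^2 * (z - z₁)^2)⁻¹ - 2 * ((z₁ - z₂)^3 * (z - z₁))⁻¹ +
   ((z₁ - z₂)^2 * (z - z₂)^2)⁻¹ + 2 * ((z₁ - z₂)^3 * (z - z₂))⁻¹) •
    (![1, 1, 1] : Fin 3 → ℂ)

set_option maxHeartbeats 2000000 in
theorem linear_independence_of_solutions (z₁ z₂ : ℂ) (hz : z₁ ≠ z₂)
    (M₁ M₂ M₃ M₄ : Fin 3 → ℂ)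
    (hM₁ : M₂ + M₄ = 0)
    (hM₂ : M₁ + z₁ • M₂ + M₃ + z₂ • M₄ = ![0, 1, -1])
    (W2 : ℂ → Fin 3 → ℂ)
    (hW2def : ∀ z : ℂ, W2 z = polePart z₁ z₂ M₁ M₂ M₃ M₄ z)
    (hW2sol : ∀ z : ℂ, z ≠ z₁ → z ≠ z₂ →
      HasDerivAt W2 ((-2 : ℂ) • (A z₁ z₂ z *ᵥ W2 z)) z)
    (α₁ α₂ α₃ : ℂ)
    (h : ∀ z : ℂ, z ≠ z₁ → z ≠ z₂ →
      α₁ • W1 z₁ z₂ z + α₂ • W2 z + α₃ • W3 z₁ z₂ z = 0) :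
    α₁ = 0 ∧ α₂ = 0 ∧ α₃ = 0 := by

  have he : z₂ - z₁ ≠ 0 := sub_ne_zero.mpr (Ne.symm hz)
  have he' : z₁ - z₂ ≠ 0 := sub_ne_zero.mpr hz
  have cancel2 : ∀ a b : ℂ, a * ((z₂-z₁)^2)⁻¹ + b * (((z₂-z₁)^2)⁻¹ * ((z₁-z₂)^2)⁻¹) = 0 →
      a * (z₂-z₁)^2 = -b := by
    intro a b hab
    field_simp at hab
    have h2 : (z₁-z₂)^2 * (a*(z₂-z₁)^2 + b) = 0 := by linear_combination (z₁-z₂)^2 * hab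
    have h3 := (mul_eq_zero.mp h2).resolve_left (pow_ne_zero 2 he')
    linear_combination h3
  have cancel3 : ∀ a b : ℂ, a * (z₂-z₁)⁻¹ + b * ((z₂-z₁)⁻¹ * ((z₁-z₂)^3)⁻¹) = 0 →
      a * (z₁-z₂)^3 = -b := by
    intro a b hab
    field_simp at hab
    have h2 : (z₂-z₁) * (a*(z₁-z₂)^3 + b) = 0 := by linear_combination (z₂-z₁) * hab
    have h3 := (mul_eq_zero.mp h2).resolve_left he
    linear_combination h3
  have E2 := congrFun (h (z₁ + 2*(z₂-z₁))
    (by intro hc; apply he; linear_combination (sub_eq_zero.mpr hc)/2)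
    (by intro hc; apply he; linear_combination (sub_eq_zero.mpr hc)/1)) 0
  rw [hW2def] at E2
  simp only [W1, W3, polePart, L1, L2, L3, L4, Gm2, Gm1, G0, Pi.add_apply, Pi.smul_apply,
    smul_eq_mul, Matrix.cons_val_zero, Matrix.cons_val_one, Matrix.head_cons, Pi.zero_apply] at E2
  rw [show z₁ + 2*(z₂-z₁) - z₁ = 2*(z₂-z₁) from by ring,
      show z₁ + 2*(z₂-z₁) - z₂ = 1*(z₂-z₁) from by ring] at E2
  simp only [mul_pow, mul_inv] at E2
  have E3 := congrFun (h (z₁ + 3*(z₂-z₁))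
    (by intro hc; apply he; linear_combination (sub_eq_zero.mpr hc)/3)
    (by intro hc; apply he; linear_combination (sub_eq_zero.mpr hc)/2)) 0
  rw [hW2def] at E3
  simp only [W1, W3, polePart, L1, L2, L3, L4, Gm2, Gm1, G0, Pi.add_apply, Pi.smul_apply,
    smul_eq_mul, Matrix.cons_val_zero, Matrix.cons_val_one, Matrix.head_cons, Pi.zero_apply] at E3
  rw [show z₁ + 3*(z₂-z₁) - z₁ = 3*(z₂-z₁) from by ring,
      show z₁ + 3*(z₂-z₁) - z₂ = 2*(z₂-z₁) from by ring] at E3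
  simp only [mul_pow, mul_inv] at E3
  have E4 := congrFun (h (z₁ + 4*(z₂-z₁))
    (by intro hc; apply he; linear_combination (sub_eq_zero.mpr hc)/4)
    (by intro hc; apply he; linear_combination (sub_eq_zero.mpr hc)/3)) 0
  rw [hW2def] at E4
  simp only [W1, W3, polePart, L1, L2, L3, L4, Gm2, Gm1, G0, Pi.add_apply, Pi.smul_apply,
    smul_eq_mul, Matrix.cons_val_zero, Matrix.cons_val_one, Matrix.head_cons, Pi.zero_apply] at E4
  rw [show z₁ + 4*(z₂-z₁) - z₁ = 4*(z₂-z₁) from by ring,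
      show z₁ + 4*(z₂-z₁) - z₂ = 3*(z₂-z₁) from by ring] at E4
  simp only [mul_pow, mul_inv] at E4
  have E5 := congrFun (h (z₁ + 5*(z₂-z₁))
    (by intro hc; apply he; linear_combination (sub_eq_zero.mpr hc)/5)
    (by intro hc; apply he; linear_combination (sub_eq_zero.mpr hc)/4)) 0
  rw [hW2def] at E5
  simp only [W1, W3, polePart, L1, L2, L3, L4, Gm2, Gm1, G0, Pi.add_apply, Pi.smul_apply,
    smul_eq_mul, Matrix.cons_val_zero, Matrix.cons_val_one, Matrix.head_cons, Pi.zero_apply] at E5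
  rw [show z₁ + 5*(z₂-z₁) - z₁ = 5*(z₂-z₁) from by ring,
      show z₁ + 5*(z₂-z₁) - z₂ = 4*(z₂-z₁) from by ring] at E5
  simp only [mul_pow, mul_inv] at E5
  have Em1 := congrFun (h (z₁ + (-1)*(z₂-z₁))
    (by intro hc; apply he; linear_combination (sub_eq_zero.mpr hc)/(-1))
    (by intro hc; apply he; linear_combination (sub_eq_zero.mpr hc)/(-2))) 0
  rw [hW2def] at Em1
  simp only [W1, W3, polePart, L1, L2, L3, L4, Gm2, Gm1, G0, Pi.add_apply, Pi.smul_apply,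
    smul_eq_mul, Matrix.cons_val_zero, Matrix.cons_val_one, Matrix.head_cons, Pi.zero_apply] at Em1
  rw [show z₁ + (-1)*(z₂-z₁) - z₁ = (-1)*(z₂-z₁) from by ring,
      show z₁ + (-1)*(z₂-z₁) - z₂ = (-2)*(z₂-z₁) from by ring] at Em1
  simp only [mul_pow, mul_inv] at Em1
  have Em2 := congrFun (h (z₁ + (-2)*(z₂-z₁))
    (by intro hc; apply he; linear_combination (sub_eq_zero.mpr hc)/(-2))
    (by intro hc; apply he; linear_combination (sub_eq_zero.mpr hc)/(-3))) 0
  rw [hW2def] at Em2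
  simp only [W1, W3, polePart, L1, L2, L3, L4, Gm2, Gm1, G0, Pi.add_apply, Pi.smul_apply,
    smul_eq_mul, Matrix.cons_val_zero, Matrix.cons_val_one, Matrix.head_cons, Pi.zero_apply] at Em2
  rw [show z₁ + (-2)*(z₂-z₁) - z₁ = (-2)*(z₂-z₁) from by ring,
      show z₁ + (-2)*(z₂-z₁) - z₂ = (-3)*(z₂-z₁) from by ring] at Em2
  simp only [mul_pow, mul_inv] at Em2
  have Em3 := congrFun (h (z₁ + (-3)*(z₂-z₁))
    (by intro hc; apply he; linear_combination (sub_eq_zero.mpr hc)/(-3))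
    (by intro hc; apply he; linear_combination (sub_eq_zero.mpr hc)/(-4))) 0
  rw [hW2def] at Em3
  simp only [W1, W3, polePart, L1, L2, L3, L4, Gm2, Gm1, G0, Pi.add_apply, Pi.smul_apply,
    smul_eq_mul, Matrix.cons_val_zero, Matrix.cons_val_one, Matrix.head_cons, Pi.zero_apply] at Em3
  rw [show z₁ + (-3)*(z₂-z₁) - z₁ = (-3)*(z₂-z₁) from by ring,
      show z₁ + (-3)*(z₂-z₁) - z₂ = (-4)*(z₂-z₁) from by ring] at Em3
  simp only [mul_pow, mul_inv] at Em3
  have hA1 : α₁ * (z₂ - z₁)^2 = 0 := by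
    linear_combination ((-1:ℂ)/180)*E2 + ((3:ℂ)/40)*E3 + ((-6:ℂ)/35)*E4 + ((25:ℂ)/252)*E5 + ((1:ℂ)/360)*Em1 + ((-3:ℂ)/140)*Em2 + ((3:ℂ)/140)*Em3
  have hα₁ : α₁ = 0 := (mul_eq_zero.mp hA1).resolve_right (pow_ne_zero 2 he)
  subst hα₁
  have F2 := congrFun (h (z₁ + 2*(z₂-z₁))
    (by intro hc; apply he; linear_combination (sub_eq_zero.mpr hc)/2)
    (by intro hc; apply he; linear_combination (sub_eq_zero.mpr hc)/1)) 1
  rw [hW2def] at F2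
  simp only [W1, W3, polePart, L1, L2, L3, L4, Gm2, Gm1, G0, Pi.add_apply, Pi.smul_apply,
    smul_eq_mul, Matrix.cons_val_zero, Matrix.cons_val_one, Matrix.head_cons, Pi.zero_apply] at F2
  rw [show z₁ + 2*(z₂-z₁) - z₁ = 2*(z₂-z₁) from by ring,
      show z₁ + 2*(z₂-z₁) - z₂ = 1*(z₂-z₁) from by ring] at F2
  simp only [mul_pow, mul_inv] at F2
  have F3 := congrFun (h (z₁ + 3*(z₂-z₁))
    (by intro hc; apply he; linear_combination (sub_eq_zero.mpr hc)/3)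
    (by intro hc; apply he; linear_combination (sub_eq_zero.mpr hc)/2)) 1
  rw [hW2def] at F3
  simp only [W1, W3, polePart, L1, L2, L3, L4, Gm2, Gm1, G0, Pi.add_apply, Pi.smul_apply,
    smul_eq_mul, Matrix.cons_val_zero, Matrix.cons_val_one, Matrix.head_cons, Pi.zero_apply] at F3
  rw [show z₁ + 3*(z₂-z₁) - z₁ = 3*(z₂-z₁) from by ring,
      show z₁ + 3*(z₂-z₁) - z₂ = 2*(z₂-z₁) from by ring] at F3
  simp only [mul_pow, mul_inv] at F3
  have Fm1 := congrFun (h (z₁ + (-1)*(z₂-z₁))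
    (by intro hc; apply he; linear_combination (sub_eq_zero.mpr hc)/(-1))
    (by intro hc; apply he; linear_combination (sub_eq_zero.mpr hc)/(-2))) 1
  rw [hW2def] at Fm1
  simp only [W1, W3, polePart, L1, L2, L3, L4, Gm2, Gm1, G0, Pi.add_apply, Pi.smul_apply,
    smul_eq_mul, Matrix.cons_val_zero, Matrix.cons_val_one, Matrix.head_cons, Pi.zero_apply] at Fm1
  rw [show z₁ + (-1)*(z₂-z₁) - z₁ = (-1)*(z₂-z₁) from by ring,
      show z₁ + (-1)*(z₂-z₁) - z₂ = (-2)*(z₂-z₁) from by ring] at Fm1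
  simp only [mul_pow, mul_inv] at Fm1
  have Fm2 := congrFun (h (z₁ + (-2)*(z₂-z₁))
    (by intro hc; apply he; linear_combination (sub_eq_zero.mpr hc)/(-2))
    (by intro hc; apply he; linear_combination (sub_eq_zero.mpr hc)/(-3))) 1
  rw [hW2def] at Fm2
  simp only [W1, W3, polePart, L1, L2, L3, L4, Gm2, Gm1, G0, Pi.add_apply, Pi.smul_apply,
    smul_eq_mul, Matrix.cons_val_zero, Matrix.cons_val_one, Matrix.head_cons, Pi.zero_apply] at Fm2
  rw [show z₁ + (-2)*(z₂-z₁) - z₁ = (-2)*(z₂-z₁) from by ring,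
      show z₁ + (-2)*(z₂-z₁) - z₂ = (-3)*(z₂-z₁) from by ring] at Fm2
  simp only [mul_pow, mul_inv] at Fm2
  have G1 : (α₂ * M₁ 1) * ((z₂-z₁)^2)⁻¹ + α₃ * (((z₂-z₁)^2)⁻¹ * ((z₁-z₂)^2)⁻¹) = 0 := by
    linear_combination ((2:ℂ))*F2 + ((-36:ℂ)/5)*F3 + ((4:ℂ))*Fm1 + ((-54:ℂ)/5)*Fm2
  have G2 : (α₂ * M₂ 1) * (z₂-z₁)⁻¹ + (-2*α₃) * ((z₂-z₁)⁻¹ * ((z₁-z₂)^3)⁻¹) = 0 := by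
    linear_combination ((19:ℂ)/3)*F2 + ((-108:ℂ)/5)*F3 + ((20:ℂ)/3)*Fm1 + ((-117:ℂ)/5)*Fm2
  have G3 : (α₂ * M₃ 1) * ((z₂-z₁)^2)⁻¹ + α₃ * (((z₂-z₁)^2)⁻¹ * ((z₁-z₂)^2)⁻¹) = 0 := by
    linear_combination ((4:ℂ))*F2 + ((-54:ℂ)/5)*F3 + ((2:ℂ))*Fm1 + ((-36:ℂ)/5)*Fm2
  have G4 : (α₂ * M₄ 1) * (z₂-z₁)⁻¹ + (2*α₃) * ((z₂-z₁)⁻¹ * ((z₁-z₂)^3)⁻¹) = 0 := by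
    linear_combination ((-20:ℂ)/3)*F2 + ((117:ℂ)/5)*F3 + ((-19:ℂ)/3)*Fm1 + ((108:ℂ)/5)*Fm2
  have c1 := cancel2 _ _ G1
  have c2 := cancel3 _ _ G2
  have c3 := cancel2 _ _ G3
  have c4 := cancel3 _ _ G4
  have hc := congrFun hM₂ 1
  simp only [Pi.add_apply, Pi.smul_apply, smul_eq_mul, Matrix.cons_val_one, Matrix.head_cons, Matrix.cons_val_zero] at hc
  have hA2 : α₂ * (z₂-z₁)^3 = 0 := by
    linear_combination (z₂-z₁)*c1 - z₁*c2 + (z₂-z₁)*c3 - z₂*c4 - (α₂*(z₂-z₁)^3)*hc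
  have hα₂ : α₂ = 0 := (mul_eq_zero.mp hA2).resolve_right (pow_ne_zero 3 he)
  have hα₃ : α₃ = 0 := by linear_combination c1 - ((z₂-z₁)^2 * M₁ 1)*hα₂
  exact ⟨rfl, hα₂, hα₃⟩
end
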